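/- Let $c_1, c_2 > 0$ and $0 < \delta \leq 1/2$. For all positive reals $v, V, \theta, \Theta$ with $|v/V - 1| \leq \delta$ and $|\theta/\Theta - 1| \leq \delta$, there exist constants $c_1(\delta), c_2(\delta) > 0$ such that $c_1(\delta)\big((v-V)^2/V^2 + (\theta - \Theta)^2/\Theta^2\big) \leq \Phi\big(\tfrac{\theta V}{v\Theta}\big) + \gamma\,\Phi\big(\tfrac{v}{V}\big) \leq c_2(\delta)\big((v-V)^2/V^2 + (\theta-\Theta)^2/\Theta^2\big)$ for any fixed $\gamma > 1$, where $\Phi(z) = z - 1 - \ln z$. -/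

import Mathlib

lemma phi_lb (z : ℝ) (hz : 0 < z) (hz3 : z ≤ 3) :
    (z - 1) ^ 2 / 8 ≤ z - 1 - Real.log z := by
  set s := Real.sqrt z with hs
  have hs0 : 0 ≤ s := Real.sqrt_nonneg z
  have hsq : s ^ 2 = z := Real.sq_sqrt hz.le
  have hspos : 0 < s := by positivity
  have hlog : Real.log z = 2 * Real.log s := by
    rw [← hsq, Real.log_pow]; push_cast; ring
  have hls : Real.log s ≤ s - 1 := Real.log_le_sub_one_of_pos hspos
  have h1 : (s - 1) ^ 2 ≤ z - 1 - Real.log z := by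
    rw [hlog]; nlinarith
  have h2 : (z - 1) ^ 2 / 8 ≤ (s - 1) ^ 2 := by
    nlinarith [sq_nonneg (s - 1), sq_nonneg (s - 2), sq_nonneg s,
      mul_nonneg (sq_nonneg (s - 1)) (by nlinarith : (0:ℝ) ≤ 3 - s ^ 2)]
  linarith

lemma phi_ub (z : ℝ) (hz : 1/3 ≤ z) :
    z - 1 - Real.log z ≤ 3 * (z - 1) ^ 2 := by
  have hz0 : 0 < z := by linarith
  have h : Real.log z⁻¹ ≤ z⁻¹ - 1 := Real.log_le_sub_one_of_pos (by positivity)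
  rw [Real.log_inv] at h
  have e : z - 1 - (1 - z⁻¹) = (z - 1) ^ 2 / z := by field_simp
  have h3 : (z - 1) ^ 2 / z ≤ 3 * (z - 1) ^ 2 := by
    rw [div_le_iff₀ hz0]; nlinarith [sq_nonneg (z - 1)]
  linarith

lemma aux_Wlb (u x d : ℝ) (h : u ^ 2 * x ^ 2 = d ^ 2) (hx : x ≤ 3/2) (hx0 : 0 < x) :
    4 / 9 * d ^ 2 ≤ u ^ 2 := by
  nlinarith [mul_nonneg (sq_nonneg u) (by nlinarith : (0:ℝ) ≤ 9/4 - x ^ 2)]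

lemma aux_Wub (u x d : ℝ) (h : u ^ 2 * x ^ 2 = d ^ 2) (hx : 1/2 ≤ x) :
    u ^ 2 ≤ 4 * d ^ 2 := by
  nlinarith [mul_nonneg (sq_nonneg u) (by nlinarith : (0:ℝ) ≤ x ^ 2 - 1/4)]

lemma key_lb (x y W : ℝ) (h : 4 / 9 * (y - x) ^ 2 ≤ W) :
    1 / 36 * ((x - 1) ^ 2 + (y - 1) ^ 2) ≤ W / 8 + (x - 1) ^ 2 / 8 := by
  nlinarith [sq_nonneg (y - 2 * x + 1), sq_nonneg (x - 1)]

lemma key_ub (x y W γ : ℝ) (hγ : 0 ≤ γ) (h : W ≤ 4 * (y - x) ^ 2) :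
    3 * W + γ * (3 * (x - 1) ^ 2) ≤ (24 + 3 * γ) * ((x - 1) ^ 2 + (y - 1) ^ 2) := by
  nlinarith [sq_nonneg (x + y - 2), mul_nonneg hγ (sq_nonneg (y - 1)),
    mul_nonneg hγ (sq_nonneg (x - 1))]

/-- Two-variable quadratic equivalence for the relative entropy
`Φ(θV/(vΘ)) + γΦ(v/V)`. -/
theorem stmt_18 (γ : ℝ) (hγ : 1 < γ) (δ : ℝ) (hδ : 0 < δ) (hδ' : δ ≤ 1/2)
    (Φ : ℝ → ℝ) (hΦ : ∀ z : ℝ, Φ z = z - 1 - Real.log z) :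
    ∃ c₁ > (0 : ℝ), ∃ c₂ > (0 : ℝ), ∀ v V θ Θ : ℝ,
      0 < v → 0 < V → 0 < θ → 0 < Θ →
      |v / V - 1| ≤ δ → |θ / Θ - 1| ≤ δ →
      c₁ * ((v - V) ^ 2 / V ^ 2 + (θ - Θ) ^ 2 / Θ ^ 2) ≤
          Φ (θ * V / (v * Θ)) + γ * Φ (v / V) ∧
      Φ (θ * V / (v * Θ)) + γ * Φ (v / V) ≤
          c₂ * ((v - V) ^ 2 / V ^ 2 + (θ - Θ) ^ 2 / Θ ^ 2) := by
  refine ⟨1/36, by norm_num, 24 + 3 * γ, by linarith, ?_⟩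
  intro v V θ Θ hv hV hθ hΘ hvV hθΘ
  set x := v / V with hxdef
  set y := θ / Θ with hydef
  obtain ⟨hvV1, hvV2⟩ := abs_le.mp hvV
  obtain ⟨hθΘ1, hθΘ2⟩ := abs_le.mp hθΘ
  have hx1 : 1/2 ≤ x := by linarith
  have hx2 : x ≤ 3/2 := by linarith
  have hy1 : 1/2 ≤ y := by linarith
  have hy2 : y ≤ 3/2 := by linarith
  have hx0 : 0 < x := by linarith
  have hw : θ * V / (v * Θ) = y / x := by
    rw [hxdef, hydef]; field_simp
  have hw1 : 1/3 ≤ y / x := by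
    rw [le_div_iff₀ hx0]; nlinarith
  have hw2 : y / x ≤ 3 := by
    rw [div_le_iff₀ hx0]; nlinarith
  have hA : (v - V) ^ 2 / V ^ 2 = (x - 1) ^ 2 := by
    rw [hxdef]; field_simp
  have hB : (θ - Θ) ^ 2 / Θ ^ 2 = (y - 1) ^ 2 := by
    rw [hydef]; field_simp
  set w := y / x with hwdef
  have hwx : (w - 1) * x = y - x := by rw [hwdef]; field_simp
  have hw0 : 0 < w := by positivity
  have L1 : (w - 1) ^ 2 / 8 ≤ w - 1 - Real.log w := phi_lb _ hw0 hw2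
  have L2 : (x - 1) ^ 2 / 8 ≤ x - 1 - Real.log x := phi_lb x hx0 (by linarith)
  have U1 : w - 1 - Real.log w ≤ 3 * (w - 1) ^ 2 := phi_ub _ hw1
  have U2 : x - 1 - Real.log x ≤ 3 * (x - 1) ^ 2 := phi_ub x (by linarith)
  have hΦx0 : 0 ≤ x - 1 - Real.log x := le_trans (by positivity) L2
  have hgam : x - 1 - Real.log x ≤ γ * (x - 1 - Real.log x) :=
    le_mul_of_one_le_left hΦx0 hγ.le
  have hgamU : γ * (x - 1 - Real.log x) ≤ γ * (3 * (x - 1) ^ 2) :=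
    mul_le_mul_of_nonneg_left U2 (by linarith)
  have hsq : (w - 1) ^ 2 * x ^ 2 = (y - x) ^ 2 := by rw [← hwx]; ring
  have hWlb := aux_Wlb (w - 1) x (y - x) hsq hx2 hx0
  have hWub := aux_Wub (w - 1) x (y - x) hsq hx1
  have hKL := key_lb x y ((w - 1) ^ 2) hWlb
  have hKU := key_ub x y ((w - 1) ^ 2) γ (by linarith) hWub
  rw [hw, hΦ, hΦ, hA, hB]
  exact ⟨by linarith, by linarith⟩
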